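/- The decision problem ACCEPTS-LONG-SHIFT is decidable: given a finite alphabet Γ, a letter c ∉ Γ, and a deterministic finite automaton M with finite state set over the input alphabet (Γ ∪ {c})², it is decidable whether M accepts a word of the form (x c^n) × (c^n x) for some x ∈ Γ* and some n ≥ |x|. -/

import Mathlib

set_option maxHeartbeats 2000000


/-- Run a DFA presented by its transition table `T` (the entry `T[q][a]` is the state
reached from state `q` on input letter `a`; out-of-range lookups default to state `0`).
States and letters are natural numbers; only finitely many states are ever reachable. -/
def dfaRun (T : List (List ℕ)) : ℕ → List ℕ → ℕ
  | q, [] => q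
  | q, a :: w => dfaRun T ((T.getD q []).getD a 0) w

/-- The DFA with transition table `T`, initial state `q0` and list of accepting states `F`
accepts the word `w`. -/
def dfaAccepts (T : List (List ℕ)) (q0 : ℕ) (F : List ℕ) (w : List ℕ) : Prop :=
  dfaRun T q0 w ∈ F

namespace ALS

/-- one transition step -/
def step (T : List (List ℕ)) (q a : ℕ) : ℕ := (T.getD q []).getD a 0

theorem dfaRun_eq_foldl (T : List (List ℕ)) (q : ℕ) (w : List ℕ) :
    dfaRun T q w = w.foldl (step T) q := by
  induction w generalizing q with
  | nil => rfl
  | cons a w ih => simp [dfaRun, List.foldl, ih, step]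

theorem dfaRun_append (T : List (List ℕ)) (q : ℕ) (u v : List ℕ) :
    dfaRun T q (u ++ v) = dfaRun T (dfaRun T q u) v := by
  simp [dfaRun_eq_foldl, List.foldl_append]

/-- max of a list of naturals -/
def maxL (l : List ℕ) : ℕ := l.foldl max 0

theorem le_foldl_max (l : List ℕ) (b : ℕ) : b ≤ l.foldl max b := by
  induction l generalizing b with
  | nil => exact le_rfl
  | cons a l ih => exact le_trans (le_max_left b a) (ih _)

theorem mem_le_maxL {a : ℕ} {l : List ℕ} (h : a ∈ l) : a ≤ maxL l := by
  unfold maxL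
  generalize 0 = b
  induction l generalizing b with
  | nil => simp at h
  | cons c l ih =>
    rcases List.mem_cons.1 h with rfl | h
    · exact le_trans (le_max_right b a) (le_foldl_max _ _)
    · exact ih h _

/-- a bound on all states ever reachable -/
def bigN (T : List (List ℕ)) (q0 : ℕ) : ℕ := max q0 (maxL (T.map maxL))

theorem getD_le_maxL (l : List ℕ) (a : ℕ) : l.getD a 0 ≤ maxL l := by
  rcases lt_or_ge a l.length with h | h
  · rw [List.getD_eq_getElem _ _ h]
    exact mem_le_maxL (List.getElem_mem _)
  · rw [List.getD_eq_default _ _ h]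
    exact Nat.zero_le _

theorem step_le (T : List (List ℕ)) (q0 q a : ℕ) : step T q a ≤ bigN T q0 := by
  refine le_trans (getD_le_maxL _ _) (le_trans ?_ (le_max_right _ _))
  rcases lt_or_ge q T.length with h | h
  · rw [List.getD_eq_getElem _ _ h]
    exact mem_le_maxL (List.mem_map_of_mem (f := maxL) (List.getElem_mem _))
  · rw [List.getD_eq_default _ _ h]
    exact Nat.zero_le _

theorem dfaRun_le (T : List (List ℕ)) (q0 q : ℕ) (w : List ℕ) (hq : q ≤ bigN T q0) :
    dfaRun T q w ≤ bigN T q0 := by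
  induction w generalizing q with
  | nil => exact hq
  | cons a w ih => exact ih _ (step_le T q0 q a)

/-- running on `m` copies of the letter `Nat.pair 0 0` -/
def runc (T : List (List ℕ)) (q : ℕ) : ℕ → ℕ
  | 0 => q
  | m + 1 => step T (runc T q m) (Nat.pair 0 0)

theorem runc_eq (T : List (List ℕ)) (q m : ℕ) :
    runc T q m = dfaRun T q (List.replicate m (Nat.pair 0 0)) := by
  induction m generalizing q with
  | zero => rfl
  | succ m ih =>
    rw [List.replicate_succ', dfaRun_append]
    rw [runc, ih]
    rfl

theorem runc_add (T : List (List ℕ)) (q a b : ℕ) :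
    runc T q (a + b) = runc T (runc T q a) b := by
  simp [runc_eq, ← dfaRun_append, ← List.replicate_add]

theorem runc_le (T : List (List ℕ)) (q0 q m : ℕ) (hq : q ≤ bigN T q0) :
    runc T q m ≤ bigN T q0 := by
  rw [runc_eq]; exact dfaRun_le _ _ _ _ hq

/-- the two halves of the zipped word -/
def map1 (x : List ℕ) : List ℕ := x.map fun a => Nat.pair a 0
def map2 (x : List ℕ) : List ℕ := x.map fun a => Nat.pair 0 a

theorem map1_append (u v : List ℕ) : map1 (u ++ v) = map1 u ++ map1 v := List.map_append
theorem map2_append (u v : List ℕ) : map2 (u ++ v) = map2 u ++ map2 v := List.map_append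

/-- The run-through condition: the automaton accepts
`(x c^{|x|+m}) × (c^{|x|+m} x)`. -/
def Accept (T : List (List ℕ)) (q0 : ℕ) (F : List ℕ) (x : List ℕ) (m : ℕ) : Prop :=
  dfaRun T (runc T (dfaRun T q0 (map1 x)) m) (map2 x) ∈ F

theorem zip_decomp (x : List ℕ) (m : ℕ) :
    List.zipWith Nat.pair (x ++ List.replicate (x.length + m) 0)
        (List.replicate (x.length + m) 0 ++ x) =
      map1 x ++ List.replicate m (Nat.pair 0 0) ++ map2 x := by
  have h1 : ∀ y : List ℕ, List.zipWith Nat.pair y (List.replicate y.length 0) = map1 y := by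
    intro y
    induction y with
    | nil => rfl
    | cons a y ih => simp [List.replicate_succ, map1] at ih ⊢; exact ih
  have h2 : ∀ y : List ℕ, List.zipWith Nat.pair (List.replicate y.length 0) y = map2 y := by
    intro y
    induction y with
    | nil => rfl
    | cons a y ih => simp [List.replicate_succ, map2] at ih ⊢; exact ih
  have h3 : List.zipWith Nat.pair (List.replicate m (0:ℕ)) (List.replicate m (0:ℕ)) =
      List.replicate m (Nat.pair 0 0) := by
    induction m with
    | zero => rfl
    | succ m ih => simp [List.replicate_succ, ih]
  have e1 : x ++ List.replicate (x.length + m) 0 =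
      x ++ (List.replicate m (0:ℕ) ++ List.replicate x.length 0) := by
    rw [← List.replicate_add, Nat.add_comm]
  have e2 : List.replicate (x.length + m) (0:ℕ) ++ x =
      List.replicate x.length (0:ℕ) ++ (List.replicate m 0 ++ x) := by
    rw [← List.append_assoc, ← List.replicate_add]
  rw [e1, e2]
  rw [List.zipWith_append (by simp : x.length = (List.replicate x.length (0:ℕ)).length)]
  rw [List.zipWith_append (by simp : (List.replicate m (0:ℕ)).length = (List.replicate m (0:ℕ)).length)]
  rw [h1, h3, h2]
  simp [List.append_assoc]

theorem accept_iff (T : List (List ℕ)) (q0 : ℕ) (F : List ℕ) (x : List ℕ) (m : ℕ) :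
    Accept T q0 F x m ↔
      dfaAccepts T q0 F
        (List.zipWith Nat.pair (x ++ List.replicate (x.length + m) 0)
          (List.replicate (x.length + m) 0 ++ x)) := by
  rw [dfaAccepts, zip_decomp, dfaRun_append, dfaRun_append, Accept, runc_eq]

/-- shrinking the middle block -/
theorem shrink_m (T : List (List ℕ)) (q0 p : ℕ) (hp : p ≤ bigN T q0) :
    ∀ m : ℕ, ∃ m' ≤ bigN T q0 + 1, runc T p m' = runc T p m := by
  intro m
  induction m using Nat.strong_induction_on with
  | _ m ih =>
  set N := bigN T q0 with hN
  rcases le_or_gt m (N + 1) with h | h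
  · exact ⟨m, h, rfl⟩
  · have hmap : ∀ i ∈ Finset.range (N + 2), runc T p i ∈ Finset.range (N + 1) := by
      intro i _
      exact Finset.mem_range.2 (Nat.lt_succ_of_le (runc_le T q0 p i hp))
    obtain ⟨i, hi, j, hj, hne, heq⟩ :=
      Finset.exists_ne_map_eq_of_card_lt_of_maps_to (by simp) hmap
    rw [Finset.mem_range] at hi hj
    -- wlog i < j
    obtain ⟨i, j, hij, hjN, heq⟩ : ∃ i j, i < j ∧ j < N + 2 ∧ runc T p i = runc T p j := by
      rcases lt_or_gt_of_ne hne with h' | h'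
      · exact ⟨i, j, h', hj, heq⟩
      · exact ⟨j, i, h', hi, heq.symm⟩
    have hjm : j ≤ m := le_of_lt (lt_of_lt_of_le hjN (by omega))
    have key : runc T p (m - (j - i)) = runc T p m := by
      have e1 : j + (m - j) = m := by omega
      have e2 : m - (j - i) = i + (m - j) := by omega
      rw [e2, runc_add, heq, ← runc_add, e1]
    have hlt : m - (j - i) < m := by omega
    obtain ⟨m', hm', hrm⟩ := ih _ hlt
    exact ⟨m', hm', by rw [hrm, key]⟩

/-- shrinking the word -/
theorem shrink_x (T : List (List ℕ)) (q0 : ℕ) (F : List ℕ) (m : ℕ) :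
    ∀ (L : ℕ) (x : List ℕ), x.length ≤ L → Accept T q0 F x m →
      ∃ x' : List ℕ, x'.length ≤ (bigN T q0 + 1) * (bigN T q0 + 1) ∧
        (∀ a ∈ x', a ∈ x) ∧ Accept T q0 F x' m := by
  intro L
  induction L with
  | zero =>
    intro x hL hacc
    exact ⟨x, le_trans hL (Nat.zero_le _), fun a ha => ha, hacc⟩
  | succ L ihL =>
  intro x hL hacc
  set N := bigN T q0 with hN
  rcases le_or_gt x.length ((N + 1) * (N + 1)) with h | h
  · exact ⟨x, h, fun a ha => ha, hacc⟩
  · set Q : ℕ := runc T (dfaRun T q0 (map1 x)) m with hQ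
    set P : ℕ → ℕ := fun i => dfaRun T q0 (map1 (x.take i)) with hP
    set S : ℕ → ℕ := fun i => dfaRun T Q (map2 (x.take i)) with hS
    have hQle : Q ≤ N := runc_le T q0 _ m (dfaRun_le T q0 q0 _ (le_max_left _ _))
    have hmap : ∀ i ∈ Finset.range ((N + 1) * (N + 1) + 1),
        Nat.pair (P i) (S i) ∈ ((Finset.range (N + 1) ×ˢ Finset.range (N + 1)).image
          fun p : ℕ × ℕ => Nat.pair p.1 p.2) := by
      intro i _
      refine Finset.mem_image.2 ⟨(P i, S i), ?_, rfl⟩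
      refine Finset.mem_product.2 ⟨Finset.mem_range.2 ?_, Finset.mem_range.2 ?_⟩
      · exact Nat.lt_succ_of_le (dfaRun_le T q0 q0 _ (le_max_left _ _))
      · exact Nat.lt_succ_of_le (dfaRun_le T q0 Q _ hQle)
    have hcard : ((Finset.range (N + 1) ×ˢ Finset.range (N + 1)).image
        fun p : ℕ × ℕ => Nat.pair p.1 p.2).card < (Finset.range ((N + 1) * (N + 1) + 1)).card := by
      calc ((Finset.range (N + 1) ×ˢ Finset.range (N + 1)).image
            fun p : ℕ × ℕ => Nat.pair p.1 p.2).card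
          ≤ ((Finset.range (N + 1)) ×ˢ (Finset.range (N + 1))).card := Finset.card_image_le
        _ < (Finset.range ((N + 1) * (N + 1) + 1)).card := by simp
    obtain ⟨i, hi, j, hj, hne, heq⟩ :=
      Finset.exists_ne_map_eq_of_card_lt_of_maps_to hcard hmap
    rw [Finset.mem_range] at hi hj
    rw [Nat.pair_eq_pair] at heq
    obtain ⟨i, j, hij, hjb, hPij, hSij⟩ :
        ∃ i j, i < j ∧ j < (N + 1) * (N + 1) + 1 ∧ P i = P j ∧ S i = S j := by
      rcases lt_or_gt_of_ne hne with h' | h'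
      · exact ⟨i, j, h', hj, heq.1, heq.2⟩
      · exact ⟨j, i, h', hi, heq.1.symm, heq.2.symm⟩
    have hjlen : j ≤ x.length := by omega
    set x' : List ℕ := x.take i ++ x.drop j with hx'
    have takej : x.take j = x.take i ++ (x.take j).drop i := by
      conv_lhs => rw [← List.take_append_drop i (x.take j)]
      rw [List.take_take, min_eq_left (le_of_lt hij)]
    have hrun1 : ∀ u : List ℕ, dfaRun T q0 (map1 (x.take i ++ u)) =
        dfaRun T (P i) (map1 u) := by
      intro u; rw [map1_append, dfaRun_append]
    have hrun2 : ∀ u : List ℕ, dfaRun T Q (map2 (x.take i ++ u)) =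
        dfaRun T (S i) (map2 u) := by
      intro u; rw [map2_append, dfaRun_append]
    have htkj1 : dfaRun T q0 (map1 (x.take j)) = P j := rfl
    have htkj2 : dfaRun T Q (map2 (x.take j)) = S j := rfl
    have hP' : dfaRun T q0 (map1 x') = dfaRun T q0 (map1 x) := by
      rw [hx', hrun1, hPij, ← htkj1, ← dfaRun_append, ← map1_append, List.take_append_drop]
    have hS' : dfaRun T Q (map2 x') = dfaRun T Q (map2 x) := by
      rw [hx', hrun2, hSij, ← htkj2, ← dfaRun_append, ← map2_append, List.take_append_drop]
    have hacc' : Accept T q0 F x' m := by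
      rw [Accept, hP', ← hQ, hS']
      exact hacc
    have hlen' : x'.length < x.length := by
      rw [hx']
      simp only [List.length_append, List.length_take, List.length_drop]
      omega
    have hmem : ∀ a ∈ x', a ∈ x := by
      intro a ha
      rcases List.mem_append.1 ha with h' | h'
      · exact List.mem_of_mem_take h'
      · exact List.mem_of_mem_drop h'
    obtain ⟨x'', h1, h2, h3⟩ := ihL x' (by omega) hacc'
    exact ⟨x'', h1, fun a ha => hmem a (h2 a ha), h3⟩

/-- all words over `{1, …, k}` of length at most `L` -/
def words (k : ℕ) : ℕ → List (List ℕ)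
  | 0 => [[]]
  | L + 1 => [] :: (List.range k).flatMap fun a => (words k L).map fun w => (a + 1) :: w

theorem mem_words (k : ℕ) : ∀ (L : ℕ) (x : List ℕ),
    x ∈ words k L ↔ x.length ≤ L ∧ ∀ a ∈ x, 1 ≤ a ∧ a ≤ k := by
  intro L
  induction L with
  | zero =>
    intro x
    simp only [words, List.mem_singleton]
    constructor
    · rintro rfl; simp
    · rintro ⟨h1, _⟩; exact List.eq_nil_of_length_eq_zero (Nat.le_zero.1 h1)
  | succ L ih =>
    intro x
    simp only [words, List.mem_cons, List.mem_flatMap, List.mem_map, List.mem_range]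
    constructor
    · rintro (rfl | ⟨a, ha, w, hw, rfl⟩)
      · simp
      · obtain ⟨h1, h2⟩ := (ih w).1 hw
        refine ⟨by simpa using Nat.succ_le_succ h1, ?_⟩
        intro b hb
        rcases List.mem_cons.1 hb with rfl | hb
        · omega
        · exact h2 b hb
    · rintro ⟨h1, h2⟩
      cases x with
      | nil => exact Or.inl rfl
      | cons b w =>
        have hb := h2 b List.mem_cons_self
        refine Or.inr ⟨b - 1, by omega, w, (ih w).2 ⟨by simpa using h1,
          fun a ha => h2 a (List.mem_cons_of_mem _ ha)⟩, ?_⟩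
        have : b - 1 + 1 = b := by omega
        rw [this]

/-- boolean existential over a list, written with `foldl` so that it is
easy to prove primitive recursive -/
def existsB {α : Type} (l : List α) (p : α → Bool) : Bool :=
  l.foldl (fun b a => b || p a) false

theorem foldl_or {α : Type} (p : α → Bool) : ∀ (l : List α) (b : Bool),
    l.foldl (fun b a => b || p a) b = (b || existsB l p) := by
  intro l
  induction l with
  | nil => intro b; simp [existsB]
  | cons a l ih =>
    intro b
    have h1 : (a :: l).foldl (fun b a => b || p a) b
        = l.foldl (fun b a => b || p a) (b || p a) := rfl
    have h2 : existsB (a :: l) p = l.foldl (fun b a => b || p a) (false || p a) := rfl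
    rw [h1, ih, h2, ih, Bool.false_or, Bool.or_assoc]

theorem existsB_iff {α : Type} (l : List α) (p : α → Bool) :
    existsB l p = true ↔ ∃ a ∈ l, p a = true := by
  induction l with
  | nil => simp [existsB]
  | cons a l ih =>
    unfold existsB
    show l.foldl _ (false || p a) = true ↔ _
    rw [foldl_or]
    simp only [Bool.false_or, Bool.or_eq_true, ih, List.mem_cons]
    constructor
    · rintro (h | ⟨b, hb, h⟩)
      · exact ⟨a, Or.inl rfl, h⟩
      · exact ⟨b, Or.inr hb, h⟩
    · rintro ⟨b, (rfl | hb), h⟩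
      · exact Or.inl h
      · exact Or.inr ⟨b, hb, h⟩

/-- the decision procedure -/
def decider (p : ℕ × List (List ℕ) × ℕ × List ℕ) : Bool :=
  existsB (words p.1 ((bigN p.2.1 p.2.2.1 + 1) * (bigN p.2.1 p.2.2.1 + 1))) fun x =>
    existsB (List.range (bigN p.2.1 p.2.2.1 + 2)) fun m =>
      existsB p.2.2.2 fun s =>
        s == dfaRun p.2.1 (runc p.2.1 (dfaRun p.2.1 p.2.2.1 (map1 x)) m) (map2 x)

theorem decider_iff (k : ℕ) (T : List (List ℕ)) (q0 : ℕ) (F : List ℕ) :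
    decider (k, T, q0, F) = true ↔
      ∃ (x : List ℕ) (m : ℕ), (∀ a ∈ x, 1 ≤ a ∧ a ≤ k) ∧ Accept T q0 F x m := by
  have hd : decider (k, T, q0, F) = existsB (words k ((bigN T q0 + 1) * (bigN T q0 + 1)))
      (fun x => existsB (List.range (bigN T q0 + 2)) fun m =>
        existsB F fun s =>
          s == dfaRun T (runc T (dfaRun T q0 (map1 x)) m) (map2 x)) := rfl
  constructor
  · intro h
    rw [hd, existsB_iff] at h
    obtain ⟨x, hx, h⟩ := h
    rw [existsB_iff] at h
    obtain ⟨m, _, h⟩ := h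
    rw [existsB_iff] at h
    obtain ⟨s, hs, h⟩ := h
    rw [beq_iff_eq] at h
    exact ⟨x, m, ((mem_words k _ x).1 hx).2, by rw [Accept, ← h]; exact hs⟩
  · rintro ⟨x, m, hx, hacc⟩
    obtain ⟨x', hlen', hmem', hacc'⟩ :=
      shrink_x T q0 F m x.length x le_rfl hacc
    have hple : dfaRun T q0 (map1 x') ≤ bigN T q0 :=
      dfaRun_le T q0 q0 _ (le_max_left _ _)
    obtain ⟨m', hm', hrm⟩ := shrink_m T q0 _ hple m
    have hacc'' : Accept T q0 F x' m' := by
      rw [Accept, hrm]; exact hacc'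
    rw [hd, existsB_iff]
    refine ⟨x', (mem_words _ _ _).2 ⟨hlen', fun a ha => hx a (hmem' a ha)⟩, ?_⟩
    rw [existsB_iff]
    refine ⟨m', List.mem_range.2 (by omega), ?_⟩
    rw [existsB_iff]
    exact ⟨_, hacc'', beq_iff_eq.2 rfl⟩

section Primrec

open Primrec

theorem primrec_maxL : Primrec maxL := by
  have h : Primrec₂ fun (_ : List ℕ) (p : ℕ × ℕ) => max p.1 p.2 :=
    (nat_max.comp (fst.comp snd) (snd.comp snd)).to₂
  exact (list_foldl .id (const 0) h).of_eq fun l => rfl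

theorem primrec_dfaRun {α : Type} [Primcodable α] {fT : α → List (List ℕ)} {fq : α → ℕ}
    {fw : α → List ℕ} (hT : Primrec fT) (hq : Primrec fq) (hw : Primrec fw) :
    Primrec fun a => dfaRun (fT a) (fq a) (fw a) := by
  have h : Primrec₂ fun (a : α) (p : ℕ × ℕ) => step (fT a) p.1 p.2 :=
    ((list_getD 0).comp
      ((list_getD ([] : List ℕ)).comp (hT.comp fst) (fst.comp snd))
      (snd.comp snd)).to₂
  exact (list_foldl hw hq h).of_eq fun a => (dfaRun_eq_foldl _ _ _).symm

theorem runc_eq_rec (T : List (List ℕ)) (q : ℕ) : ∀ m : ℕ,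
    (Nat.rec q (fun _ ih => step T ih (Nat.pair 0 0)) m : ℕ) = runc T q m
  | 0 => rfl
  | m + 1 => by rw [runc]; exact congrArg (fun s => step T s _) (runc_eq_rec T q m)

theorem primrec_runc {α : Type} [Primcodable α] {fT : α → List (List ℕ)} {fq fm : α → ℕ}
    (hT : Primrec fT) (hq : Primrec fq) (hm : Primrec fm) :
    Primrec fun a => runc (fT a) (fq a) (fm a) := by
  have h : Primrec₂ fun (a : α) (p : ℕ × ℕ) => step (fT a) p.2 (Nat.pair 0 0) :=
    ((list_getD 0).comp
      ((list_getD ([] : List ℕ)).comp (hT.comp fst) (snd.comp snd))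
      (const (Nat.pair 0 0))).to₂
  exact (nat_rec' hm hq h).of_eq fun a => runc_eq_rec _ _ _

theorem words_eq_rec (k : ℕ) : ∀ L : ℕ,
    (Nat.rec [[]] (fun _ ih =>
      [] :: (List.range k).flatMap fun a => ih.map fun w => (a + 1) :: w) L :
        List (List ℕ)) = words k L
  | 0 => rfl
  | L + 1 => by
    rw [words]
    exact congrArg (fun l : List (List ℕ) =>
      [] :: (List.range k).flatMap fun a => l.map fun w => (a + 1) :: w) (words_eq_rec k L)

theorem primrec_words : Primrec₂ words := by
  have hmapfn : Primrec₂ fun (r : ((ℕ × ℕ) × ℕ × List (List ℕ)) × ℕ) (w : List ℕ) =>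
      (r.2 + 1) :: w :=
    list_cons.comp₂ ((succ.comp snd).comp₂ Primrec₂.left) Primrec₂.right
  have hin : Primrec₂ fun (p : (ℕ × ℕ) × ℕ × List (List ℕ)) (b : ℕ) =>
      p.2.2.map fun w => (b + 1) :: w :=
    Primrec.to₂ (f := fun r : ((ℕ × ℕ) × ℕ × List (List ℕ)) × ℕ =>
        r.1.2.2.map fun w => (r.2 + 1) :: w)
      (list_map (snd.comp (snd.comp fst)) hmapfn)
  have h : Primrec₂ fun (a : ℕ × ℕ) (p : ℕ × List (List ℕ)) =>
      [] :: (List.range a.1).flatMap fun b => p.2.map fun w => (b + 1) :: w :=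
    Primrec.to₂ (f := fun q : (ℕ × ℕ) × ℕ × List (List ℕ) =>
        ([] : List ℕ) :: (List.range q.1.1).flatMap fun b =>
          q.2.2.map fun w => (b + 1) :: w)
      (list_cons.comp (const ([] : List ℕ))
        (list_flatMap (list_range.comp (fst.comp fst)) hin))
  exact (nat_rec' snd (const ([[]] : List (List ℕ))) h).of_eq fun a => words_eq_rec _ _

theorem primrec_existsB {α β : Type} [Primcodable α] [Primcodable β] {f : α → List β}
    {g : α → β → Bool} (hf : Primrec f) (hg : Primrec₂ g) :
    Primrec fun a => existsB (f a) (g a) := by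
  have h : Primrec₂ fun (a : α) (p : Bool × β) => (p.1 || g a p.2) :=
    Primrec.to₂ (Primrec.or.comp (fst.comp snd) (hg.comp fst (snd.comp snd)))
  exact (list_foldl hf (const false) h).of_eq fun a => rfl

abbrev Inp : Type := ℕ × List (List ℕ) × ℕ × List ℕ

theorem primrec_hN : Primrec fun p : Inp => bigN p.2.1 p.2.2.1 := by
  refine nat_max.comp (fst.comp (snd.comp snd)) (primrec_maxL.comp ?_)
  refine list_map (fst.comp snd) ?_
  exact Primrec.to₂ (f := fun q : Inp × List ℕ => maxL q.2) (primrec_maxL.comp snd)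

theorem primrec_hwords : Primrec fun p : Inp =>
    words p.1 ((bigN p.2.1 p.2.2.1 + 1) * (bigN p.2.1 p.2.2.1 + 1)) :=
  Primrec₂.comp primrec_words fst
    (nat_mul.comp (succ.comp primrec_hN) (succ.comp primrec_hN))

theorem primrec_htarget : Primrec fun r : (Inp × List ℕ) × ℕ =>
    dfaRun r.1.1.2.1 (runc r.1.1.2.1 (dfaRun r.1.1.2.1 r.1.1.2.2.1 (map1 r.1.2)) r.2)
      (map2 r.1.2) := by
  have hT2 : Primrec fun r : (Inp × List ℕ) × ℕ => r.1.1.2.1 :=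
    (fst.comp snd).comp (fst.comp fst)
  have hq02 : Primrec fun r : (Inp × List ℕ) × ℕ => r.1.1.2.2.1 :=
    (fst.comp (snd.comp snd)).comp (fst.comp fst)
  have hx2 : Primrec fun r : (Inp × List ℕ) × ℕ => r.1.2 := snd.comp fst
  have hmap1 : Primrec fun r : (Inp × List ℕ) × ℕ => map1 r.1.2 := by
    refine list_map hx2 ?_
    exact Primrec.to₂ (f := fun q : ((Inp × List ℕ) × ℕ) × ℕ => Nat.pair q.2 0)
      (Primrec₂.natPair.comp snd (const 0))
  have hmap2 : Primrec fun r : (Inp × List ℕ) × ℕ => map2 r.1.2 := by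
    refine list_map hx2 ?_
    exact Primrec.to₂ (f := fun q : ((Inp × List ℕ) × ℕ) × ℕ => Nat.pair 0 q.2)
      (Primrec₂.natPair.comp (const 0) snd)
  exact primrec_dfaRun hT2 (primrec_runc hT2 (primrec_dfaRun hT2 hq02 hmap1) snd) hmap2

theorem primrec_hinner : Primrec fun r : (Inp × List ℕ) × ℕ =>
    existsB r.1.1.2.2.2 fun s =>
      s == dfaRun r.1.1.2.1
        (runc r.1.1.2.1 (dfaRun r.1.1.2.1 r.1.1.2.2.1 (map1 r.1.2)) r.2) (map2 r.1.2) := by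
  have hF2 : Primrec fun r : (Inp × List ℕ) × ℕ => r.1.1.2.2.2 :=
    (snd.comp (snd.comp snd)).comp (fst.comp fst)
  exact primrec_existsB hF2
    (Primrec.to₂ (f := fun q : ((Inp × List ℕ) × ℕ) × ℕ =>
        q.2 == dfaRun q.1.1.1.2.1
          (runc q.1.1.1.2.1 (dfaRun q.1.1.1.2.1 q.1.1.1.2.2.1 (map1 q.1.1.2)) q.1.2)
          (map2 q.1.1.2))
      (Primrec.beq.comp snd (primrec_htarget.comp fst)))

theorem primrec_hmid : Primrec fun q : Inp × List ℕ =>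
    existsB (List.range (bigN q.1.2.1 q.1.2.2.1 + 2)) fun m =>
      existsB q.1.2.2.2 fun s =>
        s == dfaRun q.1.2.1
          (runc q.1.2.1 (dfaRun q.1.2.1 q.1.2.2.1 (map1 q.2)) m) (map2 q.2) :=
  primrec_existsB (list_range.comp (succ.comp (succ.comp (primrec_hN.comp fst))))
    (Primrec.to₂ (f := fun r : (Inp × List ℕ) × ℕ =>
        existsB r.1.1.2.2.2 fun s =>
          s == dfaRun r.1.1.2.1
            (runc r.1.1.2.1 (dfaRun r.1.1.2.1 r.1.1.2.2.1 (map1 r.1.2)) r.2) (map2 r.1.2))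
      primrec_hinner)

theorem primrec_decider : Primrec decider :=
  primrec_existsB primrec_hwords
    (Primrec.to₂ (f := fun q : Inp × List ℕ =>
        existsB (List.range (bigN q.1.2.1 q.1.2.2.1 + 2)) fun m =>
          existsB q.1.2.2.2 fun s =>
            s == dfaRun q.1.2.1
              (runc q.1.2.1 (dfaRun q.1.2.1 q.1.2.2.1 (map1 q.2)) m) (map2 q.2))
      primrec_hmid)

end Primrec

end ALS

theorem acceptsLongShift_decidable :
    ∃ f : ℕ × List (List ℕ) × ℕ × List ℕ → Bool, Computable f ∧
      ∀ (k : ℕ) (T : List (List ℕ)) (q0 : ℕ) (F : List ℕ),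
        (f (k, T, q0, F) = true ↔
          ∃ (x : List ℕ) (n : ℕ), x.length ≤ n ∧ (∀ a ∈ x, 1 ≤ a ∧ a ≤ k) ∧
            dfaAccepts T q0 F
              (List.zipWith Nat.pair (x ++ List.replicate n 0)
                (List.replicate n 0 ++ x))) := by
  refine ⟨ALS.decider, ALS.primrec_decider.to_comp, ?_⟩
  intro k T q0 F
  rw [ALS.decider_iff]
  constructor
  · rintro ⟨x, m, hx, hacc⟩
    exact ⟨x, x.length + m, Nat.le_add_right _ _, hx, (ALS.accept_iff T q0 F x m).1 hacc⟩
  · rintro ⟨x, n, hn, hx, hacc⟩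
    refine ⟨x, n - x.length, hx, (ALS.accept_iff T q0 F x (n - x.length)).2 ?_⟩
    have : x.length + (n - x.length) = n := by omega
    rw [this]
    exact hacc
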